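/- Suppose x : ℕ → ℝ≥0 satisfies for every n the inequality x_n ≥ (1 + √(1 + 4C · ∑_{y=1}^{n-1} x_y)) / (2C), where C > 0 is a constant. Then x_n ≥ n/(2C) for every n ≥ 1. -/
import Mathlib


open Finset

lemma sum_Icc_id_real (m : ℕ) : ∑ y ∈ Finset.Icc 1 m, (y : ℝ) = m * (m + 1) / 2 := by
  induction m with
  | zero => simp
  | succ k ih =>
    rw [Finset.sum_Icc_succ_top (by omega)]
    push_cast
    rw [ih]; ring

theorem skipping_metric_linear_growth
    (C : ℝ) (hC : 0 < C)
    (x : ℕ → ℝ) (hx : ∀ n, 0 ≤ x n)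
    (h : ∀ n, x n ≥
      (1 + Real.sqrt (1 + 4 * C * ∑ y ∈ Finset.Icc 1 (n - 1), x y)) / (2 * C)) :
    ∀ n, 1 ≤ n → x n ≥ (n : ℝ) / (2 * C) := by
  intro n
  induction n using Nat.strong_induction_on with
  | _ n ih =>
  intro hn
  set S := ∑ y ∈ Finset.Icc 1 (n - 1), x y with hSdef
  have hS : ((n : ℝ) - 1) * n / (4 * C) ≤ S := by
    have h1 : ∑ y ∈ Finset.Icc 1 (n - 1), ((y : ℝ) / (2 * C)) ≤ S := by
      apply Finset.sum_le_sum
      intro y hy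
      simp only [Finset.mem_Icc] at hy
      exact ih y (by omega) hy.1
    have h2 : ∑ y ∈ Finset.Icc 1 (n - 1), ((y : ℝ) / (2 * C)) =
        ((n : ℝ) - 1) * n / (4 * C) := by
      rw [← Finset.sum_div, sum_Icc_id_real]
      have hc : ((n - 1 : ℕ) : ℝ) = (n : ℝ) - 1 := by
        rw [Nat.cast_sub hn]; norm_num
      rw [hc, div_div]
      norm_num
      ring
    linarith
  have hn1 : (1 : ℝ) ≤ (n : ℝ) := by exact_mod_cast hn
  have hmul : ((n : ℝ) - 1) * n ≤ 4 * C * S := by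
    have h4C : (0 : ℝ) < 4 * C := by linarith
    have := (div_le_iff₀ h4C).mp hS
    linarith
  have hsqrt : (n : ℝ) - 1 ≤ Real.sqrt (1 + 4 * C * S) := by
    rw [show ((n : ℝ) - 1) = Real.sqrt (((n : ℝ) - 1) ^ 2) from
      (Real.sqrt_sq (by linarith)).symm]
    apply Real.sqrt_le_sqrt
    nlinarith
  have hxn := h n
  have hdiv : (n : ℝ) / (2 * C) ≤ (1 + Real.sqrt (1 + 4 * C * S)) / (2 * C) := by
    rw [div_le_div_iff_of_pos_right (by linarith)]
    linarith
  linarith
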